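/- Let X, Y, Z be Banach spaces such that ℓ_p embeds isomorphically into X, and X is isomorphic to the direct sum Y ⊕ Z. Then ℓ_p embeds isomorphically into Y or ℓ_p embeds isomorphically into Z. -/

import Mathlib

open scoped ENNReal

noncomputable section
set_option maxHeartbeats 1000000

/-- Two normed spaces are isomorphic (linearly homeomorphic). -/
def IsoBanach (X Y : Type*) [NormedAddCommGroup X] [NormedSpace ℝ X]
    [NormedAddCommGroup Y] [NormedSpace ℝ Y] : Prop :=
  Nonempty (X ≃L[ℝ] Y)

/-- `X` is isomorphic to a complemented subspace of `Y`: there are bounded linear maps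
`f : X → Y` and `g : Y → X` with `g ∘ f = id` (so `f ∘ g` is a bounded projection of `Y`
onto a subspace isomorphic to `X`). -/
def ComplementablyEmbedsIn (X Y : Type*) [NormedAddCommGroup X] [NormedSpace ℝ X]
    [NormedAddCommGroup Y] [NormedSpace ℝ Y] : Prop :=
  ∃ (f : X →L[ℝ] Y) (g : Y →L[ℝ] X), g.comp f = ContinuousLinearMap.id ℝ X

/-- `X` embeds isomorphically into `Y`: a bounded linear map bounded below (hence an
isomorphism onto its closed image). -/
def EmbedsIn (X Y : Type*) [NormedAddCommGroup X] [NormedSpace ℝ X]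
    [NormedAddCommGroup Y] [NormedSpace ℝ Y] : Prop :=
  ∃ f : X →L[ℝ] Y, ∃ c : ℝ, 0 < c ∧ ∀ x, c * ‖x‖ ≤ ‖f x‖

/-- The space `ℓ_p` of `p`-summable real sequences. -/
abbrev Lp' (p : ℝ≥0∞) : Type := lp (fun _ : ℕ => ℝ) p

variable {q : ℝ≥0∞} [Fact (1 ≤ q)]

local notation "E" => lp (fun _ : ℕ => ℝ) q

/-- Norm of a finite disjointly-supported combination. -/
theorem block_norm_sum (hq : 0 < q.toReal) (x : ℕ → E)
    (hdisj : ∀ k l, k ≠ l → ∀ i, x k i = 0 ∨ x l i = 0)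
    (hx : ∀ k, ‖x k‖ = 1) (a : ℕ → ℝ) (F : Finset ℕ) :
    ‖∑ k ∈ F, a k • x k‖ ^ q.toReal = ∑ k ∈ F, ‖a k‖ ^ q.toReal := by
  refine (lp.hasSum_norm hq (∑ k ∈ F, a k • x k)).unique ?_
  have hk : ∀ k ∈ F, HasSum (fun i => ‖a k • x k i‖ ^ q.toReal) (‖a k‖ ^ q.toReal) := by
    intro k _
    have := lp.hasSum_norm hq (a k • x k)
    have hn : ‖a k • x k‖ = ‖a k‖ := by
      rw [norm_smul, hx k, mul_one]
    simp only [hn, lp.coeFn_smul, Pi.smul_apply] at this ⊢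
    exact this
  have hsum := hasSum_sum hk
  have heq : ∀ i, ‖(∑ k ∈ F, a k • x k) i‖ ^ q.toReal
      = ∑ k ∈ F, ‖a k • x k i‖ ^ q.toReal := by
    intro i
    have hcoe : (∑ k ∈ F, a k • x k) i = ∑ k ∈ F, a k • x k i := by
      rw [lp.coeFn_sum]
      simp [lp.coeFn_smul]
    rw [hcoe]
    by_cases hall : ∀ k ∈ F, a k • x k i = 0
    · rw [Finset.sum_eq_zero hall, Finset.sum_eq_zero]
      · simp [Real.zero_rpow hq.ne']
      · intro k hkF
        rw [hall k hkF]
        simp [Real.zero_rpow hq.ne']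
    · push_neg at hall
      obtain ⟨k₀, hk₀F, hk₀⟩ := hall
      have hx₀ : x k₀ i ≠ 0 := by
        intro hzero
        exact hk₀ (by simp [hzero])
      have hothers : ∀ k ∈ F, k ≠ k₀ → a k • x k i = 0 := by
        intro k _ hne
        rcases hdisj k k₀ hne i with h | h
        · simp [h]
        · exact absurd h hx₀
      rw [Finset.sum_eq_single_of_mem k₀ hk₀F hothers,
        Finset.sum_eq_single_of_mem k₀ hk₀F]
      intro k hkF hne
      rw [hothers k hkF hne]
      simp [Real.zero_rpow hq.ne']
  exact hsum.congr_fun heq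

theorem block_summable (hq : 0 < q.toReal) (x : ℕ → E)
    (hdisj : ∀ k l, k ≠ l → ∀ i, x k i = 0 ∨ x l i = 0)
    (hx : ∀ k, ‖x k‖ = 1) (a : E) :
    Summable (fun k => a k • x k) := by
  rw [summable_iff_vanishing_norm]
  intro ε hε
  have ha : Summable (fun k => ‖a k‖ ^ q.toReal) := (lp.memℓp a).summable hq
  obtain ⟨s, hs⟩ := summable_iff_vanishing_norm.1 ha (ε ^ q.toReal)
    (Real.rpow_pos_of_pos hε _)
  refine ⟨s, fun t ht => ?_⟩
  have h1 : ‖∑ k ∈ t, a k • x k‖ ^ q.toReal = ∑ k ∈ t, ‖a k‖ ^ q.toReal :=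
    block_norm_sum hq x hdisj hx _ t
  have h2 := hs t ht
  have h3 : ∑ k ∈ t, ‖a k‖ ^ q.toReal < ε ^ q.toReal := by
    calc ∑ k ∈ t, ‖a k‖ ^ q.toReal ≤ ‖∑ k ∈ t, ‖a k‖ ^ q.toReal‖ := le_abs_self _
    _ < _ := h2
  by_contra hcon
  push_neg at hcon
  have := Real.rpow_le_rpow hε.le hcon hq.le
  rw [h1] at this
  linarith

theorem block_tsum_norm (hq : 0 < q.toReal) (x : ℕ → E)
    (hdisj : ∀ k l, k ≠ l → ∀ i, x k i = 0 ∨ x l i = 0)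
    (hx : ∀ k, ‖x k‖ = 1) (a : E) :
    ‖∑' k, a k • x k‖ = ‖a‖ := by
  have hsum := (block_summable hq x hdisj hx a).hasSum
  have h1 : Filter.Tendsto (fun F : Finset ℕ => ‖∑ k ∈ F, a k • x k‖ ^ q.toReal)
      Filter.atTop (nhds (‖∑' k, a k • x k‖ ^ q.toReal)) :=
    hsum.norm.rpow_const (Or.inr hq.le)
  have h2 : Filter.Tendsto (fun F : Finset ℕ => ‖∑ k ∈ F, a k • x k‖ ^ q.toReal)
      Filter.atTop (nhds (‖a‖ ^ q.toReal)) := by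
    refine Filter.Tendsto.congr (fun F => (block_norm_sum hq x hdisj hx _ F).symm) ?_
    exact lp.hasSum_norm hq a
  have key : ‖∑' k, a k • x k‖ ^ q.toReal = ‖a‖ ^ q.toReal := tendsto_nhds_unique h1 h2
  have h3 : ‖∑' k, a k • x k‖ ∈ {y : ℝ | 0 ≤ y} := norm_nonneg _
  have h4 : ‖a‖ ∈ {y : ℝ | 0 ≤ y} := norm_nonneg _
  exact Real.rpow_left_injOn hq.ne' h3 h4 key

/-- The block map as a continuous linear map. -/
def blockMap (hq : 0 < q.toReal) (x : ℕ → E)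
    (hdisj : ∀ k l, k ≠ l → ∀ i, x k i = 0 ∨ x l i = 0)
    (hx : ∀ k, ‖x k‖ = 1) : E →L[ℝ] E := by
  refine LinearMap.mkContinuous
    { toFun := fun a => ∑' k, a k • x k
      map_add' := ?_
      map_smul' := ?_ } 1 ?_
  · intro a b
    have ha := block_summable hq x hdisj hx a
    have hb := block_summable hq x hdisj hx b
    simp only
    rw [← Summable.tsum_add ha hb]
    congr 1
    funext k
    rw [lp.coeFn_add, Pi.add_apply, add_smul]
  · intro c a
    simp only [RingHom.id_apply]
    rw [← Summable.tsum_const_smul c (block_summable hq x hdisj hx a)]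
    congr 1
    funext k
    rw [lp.coeFn_smul, Pi.smul_apply, smul_assoc]
  · intro a
    rw [one_mul]
    exact le_of_eq (block_tsum_norm hq x hdisj hx a)

theorem blockMap_apply (hq : 0 < q.toReal) (x : ℕ → E)
    (hdisj : ∀ k l, k ≠ l → ∀ i, x k i = 0 ∨ x l i = 0)
    (hx : ∀ k, ‖x k‖ = 1) (a : E) :
    blockMap hq x hdisj hx a = ∑' k, a k • x k := rfl

theorem blockMap_norm (hq : 0 < q.toReal) (x : ℕ → E)
    (hdisj : ∀ k l, k ≠ l → ∀ i, x k i = 0 ∨ x l i = 0)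
    (hx : ∀ k, ‖x k‖ = 1) (a : E) :
    ‖blockMap hq x hdisj hx a‖ = ‖a‖ :=
  block_tsum_norm hq x hdisj hx a

theorem blockMap_single (hq : 0 < q.toReal) (x : ℕ → E)
    (hdisj : ∀ k l, k ≠ l → ∀ i, x k i = 0 ∨ x l i = 0)
    (hx : ∀ k, ‖x k‖ = 1) (k : ℕ) (c : ℝ) :
    blockMap hq x hdisj hx (lp.single q k c) = c • x k := by
  rw [blockMap_apply, tsum_eq_single k]
  · rw [lp.single_apply_self]
  · intro j hj
    rw [@lp.single_apply_ne ℕ (fun _ => ℝ) _ _ q k c j hj, zero_smul]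

/-- If `ℓ_p` embeds isomorphically into `X` and `X ≅ Y ⊕ Z`, then `ℓ_p`
embeds isomorphically into `Y` or into `Z`. -/
theorem stmt11 (p : ℝ) (hp : 1 ≤ p) [Fact (1 ≤ ENNReal.ofReal p)]
    (X Y Z : Type*) [NormedAddCommGroup X] [NormedSpace ℝ X] [CompleteSpace X]
    [NormedAddCommGroup Y] [NormedSpace ℝ Y] [CompleteSpace Y]
    [NormedAddCommGroup Z] [NormedSpace ℝ Z] [CompleteSpace Z]
    (h : EmbedsIn (Lp' (ENNReal.ofReal p)) X) (hiso : Nonempty (X ≃L[ℝ] (Y × Z))) :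
    EmbedsIn (Lp' (ENNReal.ofReal p)) Y ∨ EmbedsIn (Lp' (ENNReal.ofReal p)) Z := by
  set q : ℝ≥0∞ := ENNReal.ofReal p with hqdef
  have hp0 : 0 < p := lt_of_lt_of_le one_pos hp
  have hqr : q.toReal = p := ENNReal.toReal_ofReal hp0.le
  have hq : 0 < q.toReal := by rw [hqr]; exact hp0
  have hqt : q ≠ ⊤ := ENNReal.ofReal_ne_top
  obtain ⟨f, c, hc, hf⟩ := h
  obtain ⟨e⟩ := hiso
  set F : Lp' q →L[ℝ] Y × Z := (e : X →L[ℝ] Y × Z).comp f with hFdef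
  set K : ℝ := ‖(e.symm : (Y × Z) →L[ℝ] X)‖ with hKdef
  have hK : 0 ≤ K := norm_nonneg _
  set c' : ℝ := c / (K + 1) with hc'def
  have hc' : 0 < c' := div_pos hc (by linarith)
  have hF : ∀ a, c' * ‖a‖ ≤ ‖F a‖ := by
    intro a
    have h1 : c * ‖a‖ ≤ ‖f a‖ := hf a
    have h2 : f a = (e.symm : (Y × Z) →L[ℝ] X) (F a) := by
      simp [hFdef]
    have h3 : ‖f a‖ ≤ K * ‖F a‖ := by
      rw [h2]; exact (e.symm : (Y × Z) →L[ℝ] X).le_opNorm (F a)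
    rw [hc'def, div_mul_eq_mul_div, div_le_iff₀ (by linarith : (0:ℝ) < K + 1)]
    nlinarith [norm_nonneg (F a)]
  set fY : Lp' q →L[ℝ] Y := (ContinuousLinearMap.fst ℝ Y Z).comp F with hfYdef
  set fZ : Lp' q →L[ℝ] Z := (ContinuousLinearMap.snd ℝ Y Z).comp F with hfZdef
  have hsplit : ∀ a, ‖F a‖ ≤ ‖fY a‖ + ‖fZ a‖ := by
    intro a
    have h1 : ‖F a‖ = max ‖(F a).1‖ ‖(F a).2‖ := rfl
    have h2 : fY a = (F a).1 := rfl
    have h3 : fZ a = (F a).2 := rfl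
    rw [h1, h2, h3]
    exact max_le (le_add_of_nonneg_right (norm_nonneg _))
      (le_add_of_nonneg_left (norm_nonneg _))
  by_cases hB : ∃ n : ℕ, ∃ δ : ℝ, 0 < δ ∧ ∀ b : Lp' q,
      (∃ m, ∀ i, i < n ∨ m ≤ i → b i = 0) → δ * ‖b‖ ≤ ‖fY b‖
  · -- Case B : fY is bounded below on a tail subspace
    left
    obtain ⟨n, δ, hδ, hbd⟩ := hB
    set x : ℕ → Lp' q := fun k => lp.single q (n + k) (1 : ℝ) with hxdef
    have hdisj : ∀ k l, k ≠ l → ∀ i, x k i = 0 ∨ x l i = 0 := by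
      intro k l hkl i
      by_cases h1 : i = n + k
      · right
        exact @lp.single_apply_ne ℕ (fun _ => ℝ) _ _ q (n + l) 1 i (by omega)
      · left
        exact @lp.single_apply_ne ℕ (fun _ => ℝ) _ _ q (n + k) 1 i h1
    have hx1 : ∀ k, ‖x k‖ = 1 := by
      intro k
      simpa using (@lp.norm_single ℕ (fun _ => ℝ) q _ _ (zero_lt_one.trans_le Fact.out) (n + k) (1 : ℝ) :
        ‖(lp.single q (n + k) (1 : ℝ) : Lp' q)‖ = ‖(1 : ℝ)‖)
    set T := blockMap hq x hdisj hx1 with hTdef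
    refine ⟨fY.comp T, δ, hδ, ?_⟩
    intro a
    have hs : HasSum (fun k => lp.single q k (a k)) a := lp.hasSum_single hqt a
    have hT1 : Filter.Tendsto (fun s : Finset ℕ => δ * ‖∑ k ∈ s, lp.single q k (a k)‖)
        Filter.atTop (nhds (δ * ‖a‖)) :=
      ((continuous_norm.tendsto a).comp hs).const_mul δ
    have hT2 : Filter.Tendsto
        (fun s : Finset ℕ => ‖fY (T (∑ k ∈ s, lp.single q k (a k)))‖)
        Filter.atTop (nhds ‖fY (T a)‖) :=
      (continuous_norm.tendsto _).comp ((fY.continuous.tendsto _).comp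
        ((T.continuous.tendsto a).comp hs))
    have hcomp : ∀ b : Lp' q, (fY.comp T) b = fY (T b) := fun _ => rfl
    rw [hcomp]
    refine le_of_tendsto_of_tendsto' hT1 hT2 ?_
    intro s
    have hTs : T (∑ k ∈ s, lp.single q k (a k)) = ∑ k ∈ s, a k • x k := by
      rw [map_sum]
      exact Finset.sum_congr rfl fun k _ => blockMap_single hq x hdisj hx1 k (a k)
    have hfin : ∀ i, i < n ∨ n + s.sup id + 1 ≤ i → (∑ k ∈ s, a k • x k) i = 0 := by
      intro i hi
      have : (∑ k ∈ s, a k • x k) i = ∑ k ∈ s, a k • (x k i) := by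
        rw [lp.coeFn_sum]
        simp [lp.coeFn_smul]
      rw [this]
      refine Finset.sum_eq_zero fun k hks => ?_
      have hik : i ≠ n + k := by
        have hsup := Finset.le_sup (f := id) hks
        simp only [id_eq] at hsup
        omega
      rw [@lp.single_apply_ne ℕ (fun _ => ℝ) _ _ q (n + k) 1 i hik, smul_zero]
    have hb := hbd (∑ k ∈ s, a k • x k) ⟨n + s.sup id + 1, hfin⟩
    calc δ * ‖∑ k ∈ s, lp.single q k (a k)‖
        = δ * ‖T (∑ k ∈ s, lp.single q k (a k))‖ := by
          rw [hTdef, blockMap_norm]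
      _ = δ * ‖∑ k ∈ s, a k • x k‖ := by rw [hTs]
      _ ≤ ‖fY (∑ k ∈ s, a k • x k)‖ := hb
      _ = ‖fY (T (∑ k ∈ s, lp.single q k (a k)))‖ := by rw [hTs]
  · -- Case A : gliding hump into Z
    right
    push_neg at hB
    have pick : ∀ n : ℕ, ∀ δ : ℝ, 0 < δ → ∃ (b : Lp' q) (m : ℕ), n ≤ m ∧
        (∀ i, i < n ∨ m ≤ i → b i = 0) ∧ ‖b‖ = 1 ∧ ‖fY b‖ < δ := by
      intro n δ hδ
      obtain ⟨b, ⟨m, hm⟩, hlt⟩ := hB n δ hδ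
      have hbpos : 0 < ‖b‖ := by
        rcases (norm_nonneg b).lt_or_eq with hpos | hzero
        · exact hpos
        · exfalso
          rw [← hzero, mul_zero] at hlt
          exact absurd hlt (not_lt.mpr (norm_nonneg _))
      refine ⟨‖b‖⁻¹ • b, max m n, le_max_right _ _, ?_, ?_, ?_⟩
      · intro i hi
        have hb0 : b i = 0 := by
          refine hm i ?_
          rcases hi with hi | hi
          · exact Or.inl hi
          · exact Or.inr (le_trans (le_max_left m n) hi)
        rw [lp.coeFn_smul, Pi.smul_apply, hb0, smul_zero]
      · rw [norm_smul, norm_inv, Real.norm_of_nonneg (norm_nonneg b)]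
        exact inv_mul_cancel₀ hbpos.ne'
      · rw [map_smul, norm_smul, norm_inv, Real.norm_of_nonneg (norm_nonneg b)]
        have := mul_lt_mul_of_pos_left hlt (inv_pos.mpr hbpos)
        calc ‖b‖⁻¹ * ‖fY b‖ < ‖b‖⁻¹ * (δ * ‖b‖) := this
          _ = δ := by field_simp
    choose xs ms hms hsupp hnrm hsml using pick
    set ε : ℕ → ℝ := fun k => c' / 4 * (1 / 2) ^ k with hεdef
    have hεpos : ∀ k, 0 < ε k := fun k => by
      rw [hεdef]; positivity
    let M : ℕ → ℕ := fun k => Nat.rec 0 (fun j Mj => ms Mj (ε j) (hεpos j)) k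
    have hMsucc : ∀ k, M (k + 1) = ms (M k) (ε k) (hεpos k) := fun k => rfl
    have hMmono : Monotone M := monotone_nat_of_le_succ fun k => by
      rw [hMsucc]; exact hms _ _ _
    set x : ℕ → Lp' q := fun k => xs (M k) (ε k) (hεpos k) with hxdef
    have hsupp' : ∀ k i, i < M k ∨ M (k + 1) ≤ i → x k i = 0 := by
      intro k i hi
      rw [hMsucc] at hi
      exact hsupp (M k) (ε k) (hεpos k) i hi
    have hdisj : ∀ k l, k ≠ l → ∀ i, x k i = 0 ∨ x l i = 0 := by
      have key : ∀ k l, k < l → ∀ i, x k i = 0 ∨ x l i = 0 := by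
        intro k l hkl i
        by_cases hik : i < M (k + 1)
        · right
          exact hsupp' l i (Or.inl (lt_of_lt_of_le hik (hMmono hkl)))
        · left
          exact hsupp' k i (Or.inr (le_of_not_gt hik))
      intro k l hkl i
      rcases lt_or_gt_of_ne hkl with hlt | hgt
      · exact key k l hlt i
      · exact (key l k hgt i).symm
    have hx1 : ∀ k, ‖x k‖ = 1 := fun k => hnrm _ _ _
    have hxsmall : ∀ k, ‖fY (x k)‖ < ε k := fun k => hsml _ _ _
    set T := blockMap hq x hdisj hx1 with hTdef
    refine ⟨fZ.comp T, c' / 2, by positivity, ?_⟩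
    intro a
    have hsumm := block_summable hq x hdisj hx1 a
    have hq0 : q ≠ 0 := (zero_lt_one.trans_le Fact.out).ne'
    have hnormY : ‖fY (T a)‖ ≤ c' / 2 * ‖a‖ := by
      have hYsum : fY (T a) = ∑' k, a k • fY (x k) := by
        rw [hTdef, blockMap_apply, ContinuousLinearMap.map_tsum fY hsumm]
        exact tsum_congr fun k => by rw [map_smul]
      rw [hYsum]
      have hle : ∀ k, ‖a k • fY (x k)‖ ≤ ‖a‖ * ε k := by
        intro k
        rw [norm_smul]
        exact mul_le_mul (lp.norm_apply_le_norm hq0 a k) (hxsmall k).le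
          (norm_nonneg _) (norm_nonneg _)
      have hsummaj : Summable fun k => ‖a‖ * ε k := by
        have : Summable fun k : ℕ => ((1 : ℝ) / 2) ^ k := summable_geometric_two
        exact ((this.mul_left (c' / 4)).mul_left ‖a‖)
      have hnsum : Summable fun k => ‖a k • fY (x k)‖ :=
        Summable.of_nonneg_of_le (fun k => norm_nonneg _) hle hsummaj
      have hεsum : ∑' k, ε k = c' / 2 := by
        rw [hεdef]
        rw [tsum_mul_left, tsum_geometric_two]
        ring
      calc ‖∑' k, a k • fY (x k)‖ ≤ ∑' k, ‖a k • fY (x k)‖ := norm_tsum_le_tsum_norm hnsum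
        _ ≤ ∑' k, ‖a‖ * ε k := Summable.tsum_le_tsum hle hnsum hsummaj
        _ = ‖a‖ * ∑' k, ε k := tsum_mul_left
        _ = ‖a‖ * (c' / 2) := by rw [hεsum]
        _ = c' / 2 * ‖a‖ := mul_comm _ _
    have h1 : c' * ‖a‖ ≤ ‖F (T a)‖ := by
      have := hF (T a)
      rwa [hTdef, blockMap_norm] at this
    have h2 := hsplit (T a)
    have h3 : ‖(fZ.comp T) a‖ = ‖fZ (T a)‖ := rfl
    rw [h3]
    linarith
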